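/- arXiv:1411.4906 — 2 statements merged into one kernel-verified Lean document; each statement's English description precedes it below -/
import Mathlib

section
/- Garland's estimate: Let X be a pure k-dimensional complex such that for every (k−2)-face F, all nontrivial eigenvalues of the normalized Laplacian of the link graph lk(F,X) lie in [λ_min, λ_max] (i.e., λ_min ≤ λ₂ ≤ … ≤ λ_{n−k+1} ≤ λ_max). Then for every f in the degree-weighted orthogonal complement of B^{k−1}(X;R), (1 + kλ_min − k)⟨f,f⟩ ≤ ⟨Δ^up_{k−1} f, f⟩ ≤ (1 + kλ_max − k)⟨f,f⟩. In particular all nontrivial eigenvalues of Δ^up_{k−1}(X) lie in [1 + kλ_min − k, 1 + kλ_max − k]. -/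
/-- Signed incidence number `[F : G]`. -/
def incSign {n : ℕ} (F G : Finset (Fin n)) : ℤ :=
  if G ⊆ F ∧ F.card = G.card + 1 then
    ∑ v ∈ F \ G, (-1 : ℤ) ^ (G.filter (fun x => x < v)).card
  else 0

/-- The `(k−1)`-faces of a pure `k`-dimensional complex with set `K` of `k`-faces. -/
abbrev Faces (n k : ℕ) (K : Finset (Finset (Fin n))) :=
  {G : Finset (Fin n) // G.card = k ∧ ∃ H ∈ K, G ⊆ H}

/-- The vertices of the link of a `(k−2)`-face `F`. -/
abbrev LinkVerts (n : ℕ) (K : Finset (Finset (Fin n))) (F : Finset (Fin n)) :=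
  {u : Fin n // u ∉ F ∧ ∃ H ∈ K, insert u F ⊆ H}

open Finset

/-- Finset version of `Faces`. -/
def FacesSet (n k : ℕ) (K : Finset (Finset (Fin n))) : Finset (Finset (Fin n)) :=
  univ.filter (fun G => G.card = k ∧ ∃ H ∈ K, G ⊆ H)

/-- Finset version of `LinkVerts`. -/
def LVSet (n : ℕ) (K : Finset (Finset (Fin n))) (F : Finset (Fin n)) : Finset (Fin n) :=
  univ.filter (fun u => u ∉ F ∧ ∃ H ∈ K, insert u F ⊆ H)

lemma mem_FacesSet {n k : ℕ} {K : Finset (Finset (Fin n))} {G : Finset (Fin n)} :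
    G ∈ FacesSet n k K ↔ (G.card = k ∧ ∃ H ∈ K, G ⊆ H) := by
  simp [FacesSet]

lemma mem_LVSet {n : ℕ} {K : Finset (Finset (Fin n))} {F : Finset (Fin n)} {u : Fin n} :
    u ∈ LVSet n K F ↔ (u ∉ F ∧ ∃ H ∈ K, insert u F ⊆ H) := by
  simp [LVSet]

/-- Total extension of a cochain on faces. -/
noncomputable def fext (n k : ℕ) (K : Finset (Finset (Fin n))) (f : Faces n k K → ℝ)
    (G : Finset (Fin n)) : ℝ :=
  if h : G.card = k ∧ ∃ H ∈ K, G ⊆ H then f ⟨G, h⟩ else 0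

lemma fext_val {n k : ℕ} {K : Finset (Finset (Fin n))} (f : Faces n k K → ℝ)
    (G : Faces n k K) : fext n k K f G.1 = f G := by
  rw [fext, dif_pos G.2]

lemma incSign_insert {n : ℕ} {F : Finset (Fin n)} {u : Fin n} (hu : u ∉ F) :
    incSign (insert u F) F = (-1 : ℤ) ^ (F.filter (fun x => x < u)).card := by
  rw [incSign, if_pos ⟨subset_insert _ _, card_insert_of_notMem hu⟩]
  rw [show insert u F \ F = {u} by rw [insert_sdiff_of_notMem _ hu, sdiff_self]; rfl,
    sum_singleton]

lemma incSign_insert_mul_self {n : ℕ} {F : Finset (Fin n)} {u : Fin n} (hu : u ∉ F) :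
    ((incSign (insert u F) F : ℤ) : ℝ) * ((incSign (insert u F) F : ℤ) : ℝ) = 1 := by
  rw [incSign_insert hu]
  push_cast
  rw [← pow_add, Even.neg_one_pow ⟨_, rfl⟩]

lemma incSign_eq_zero {n : ℕ} {G F : Finset (Fin n)} (h : ¬ F ⊆ G) : incSign G F = 0 := by
  rw [incSign, if_neg (fun hc => h hc.1)]

lemma insert_eq_insert_iff {n : ℕ} {F : Finset (Fin n)} {u v : Fin n}
    (hu : u ∉ F) (hv : v ∉ F) : insert u F = insert v F ↔ u = v := by
  constructor
  · intro h
    have : u ∈ insert v F := h ▸ mem_insert_self u F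
    rcases mem_insert.mp this with h' | h'
    · exact h'
    · exact absurd h' hu
  · rintro rfl; rfl

lemma insert_inter_insert {n : ℕ} {F : Finset (Fin n)} {u v : Fin n}
    (hu : u ∉ F) (hv : v ∉ F) (huv : u ≠ v) : insert u F ∩ insert v F = F := by
  ext x
  simp only [mem_inter, mem_insert]
  constructor
  · rintro ⟨rfl | hx, rfl | hy⟩
    · exact absurd rfl huv
    · exact absurd hy hu
    · exact absurd hx hv
    · exact hx
  · intro hx; exact ⟨Or.inr hx, Or.inr hx⟩

lemma insert_union_insert {n : ℕ} (F : Finset (Fin n)) (u v : Fin n) :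
    insert u F ∪ insert v F = insert u (insert v F) := by
  rw [insert_union, union_insert, union_self]

/-- Degree-weighted quadratic form of a normalized Laplacian. -/
lemma quadform {ι : Type} [Fintype ι] [DecidableEq ι] (d : ι → ℝ) (hd : ∀ i, d i ≠ 0)
    (B : Matrix ι ι ℝ) (x : ι → ℝ) :
    ∑ i, d i * (((1 : Matrix ι ι ℝ) - Matrix.diagonal (fun i => (d i)⁻¹) * B).mulVec x) i * x i
      = ∑ i, d i * x i ^ 2 - ∑ i, ∑ j, B i j * x j * x i := by
  have hmv : ∀ i, (((1 : Matrix ι ι ℝ) - Matrix.diagonal (fun i => (d i)⁻¹) * B).mulVec x) i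
      = x i - (d i)⁻¹ * ∑ j, B i j * x j := by
    intro i
    simp only [Matrix.mulVec, dotProduct, Matrix.sub_apply, Matrix.one_apply,
      Matrix.diagonal_mul, sub_mul, ite_mul, one_mul, zero_mul, Finset.sum_sub_distrib,
      Finset.sum_ite_eq, mem_univ, if_true, Finset.mul_sum, mul_assoc]
  rw [← Finset.sum_sub_distrib]
  refine Finset.sum_congr rfl fun i _ => ?_
  rw [hmv i, mul_sub, mul_inv_cancel_left₀ (hd i), ← Finset.sum_mul]
  ring

lemma bij_insert {n k : ℕ} (K : Finset (Finset (Fin n))) (hk : 1 ≤ k)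
    {F : Finset (Fin n)} (hF : F.card = k - 1) (g : Finset (Fin n) → ℝ) :
    ∑ u ∈ LVSet n K F, g (insert u F)
      = ∑ G ∈ (FacesSet n k K).filter (fun G => F ⊆ G), g G := by
  refine Finset.sum_bij (fun u _ => insert u F) ?_ ?_ ?_ (fun a ha => rfl)
  · intro u hu
    obtain ⟨hu1, hu2⟩ := mem_LVSet.mp hu
    refine mem_filter.mpr ⟨mem_FacesSet.mpr ⟨?_, hu2⟩, subset_insert _ _⟩
    rw [card_insert_of_notMem hu1, hF]; omega
  · intro u hu u' hu' h
    exact (insert_eq_insert_iff (mem_LVSet.mp hu).1 (mem_LVSet.mp hu').1).mp h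
  · intro G hG
    obtain ⟨hG1, hFG⟩ := mem_filter.mp hG
    obtain ⟨hcard, H, hH, hGH⟩ := mem_FacesSet.mp hG1
    have hne : (G \ F).Nonempty := by
      rw [← Finset.card_pos, card_sdiff_of_subset hFG, hcard, hF]; omega
    obtain ⟨u, hu⟩ := hne
    have hu1 : u ∈ G := (mem_sdiff.mp hu).1
    have hu2 : u ∉ F := (mem_sdiff.mp hu).2
    have hins : insert u F = G := by
      refine Finset.eq_of_subset_of_card_le (insert_subset hu1 hFG) ?_
      rw [card_insert_of_notMem hu2, hcard, hF]; omega
    exact ⟨u, mem_LVSet.mpr ⟨hu2, H, hH, hins ▸ hGH⟩, hins⟩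

lemma identity1 {n k : ℕ} (K : Finset (Finset (Fin n))) (hk : 1 ≤ k)
    (g : Finset (Fin n) → ℝ) :
    ∑ F ∈ Finset.powersetCard (k-1) (univ : Finset (Fin n)), ∑ u ∈ LVSet n K F, g (insert u F)
      = (k : ℝ) * ∑ G ∈ FacesSet n k K, g G := by
  have hch : k.choose (k - 1) = k := by
    have h1 : k - (k - 1) = 1 := by omega
    have h2 := Nat.choose_symm (Nat.sub_le k 1)
    rw [h1, Nat.choose_one_right] at h2
    exact h2.symm
  calc ∑ F ∈ Finset.powersetCard (k-1) (univ : Finset (Fin n)), ∑ u ∈ LVSet n K F, g (insert u F)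
      = ∑ F ∈ Finset.powersetCard (k-1) (univ : Finset (Fin n)),
          ∑ G ∈ (FacesSet n k K).filter (fun G => F ⊆ G), g G := by
        refine Finset.sum_congr rfl fun F hF => ?_
        exact bij_insert K hk (mem_powersetCard.mp hF).2 g
    _ = ∑ F ∈ Finset.powersetCard (k-1) (univ : Finset (Fin n)),
          ∑ G ∈ FacesSet n k K, if F ⊆ G then g G else 0 := by
        simp [Finset.sum_filter]
    _ = ∑ G ∈ FacesSet n k K,
          ∑ F ∈ Finset.powersetCard (k-1) (univ : Finset (Fin n)), if F ⊆ G then g G else 0 :=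
        Finset.sum_comm
    _ = ∑ G ∈ FacesSet n k K, (k : ℝ) * g G := by
        refine Finset.sum_congr rfl fun G hG => ?_
        rw [← Finset.sum_filter]
        have hset : (Finset.powersetCard (k-1) (univ : Finset (Fin n))).filter
            (fun F => F ⊆ G) = G.powersetCard (k-1) := by
          ext F
          simp [mem_powersetCard, mem_filter, Finset.subset_univ, and_comm]
        rw [hset, Finset.sum_const, Finset.card_powersetCard, (mem_FacesSet.mp hG).1, hch,
          nsmul_eq_mul]
    _ = (k : ℝ) * ∑ G ∈ FacesSet n k K, g G := (Finset.mul_sum _ _ _).symm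

lemma Fsum_eval {n k : ℕ} (K : Finset (Finset (Fin n))) (hk : 1 ≤ k)
    {G G' : Finset (Fin n)} (hG : G.card = k) (hG' : G'.card = k)
    (val : Finset (Fin n) → ℝ) :
    ∑ F ∈ Finset.powersetCard (k-1) (univ : Finset (Fin n)),
        (if F ⊆ G ∧ F ⊆ G' ∧ G ≠ G' ∧ G ∪ G' ∈ K then val F else 0)
      = if G ≠ G' ∧ (G ∩ G').card = k - 1 ∧ G ∪ G' ∈ K then val (G ∩ G') else 0 := by
  by_cases hne : G ≠ G'
  · by_cases hU : G ∪ G' ∈ K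
    · have hle : (G ∩ G').card ≤ k - 1 := by
        have h1 : G ∩ G' ⊆ G := inter_subset_left
        have h2 : G ∩ G' ≠ G := by
          intro h
          exact hne (Finset.eq_of_subset_of_card_le (Finset.inter_eq_left.mp h)
            (by rw [hG, hG']))
        have := Finset.card_lt_card (Finset.ssubset_iff_subset_ne.mpr ⟨h1, h2⟩)
        omega
      have hstep : ∑ F ∈ Finset.powersetCard (k-1) (univ : Finset (Fin n)),
          (if F ⊆ G ∧ F ⊆ G' ∧ G ≠ G' ∧ G ∪ G' ∈ K then val F else 0)
          = ∑ F ∈ Finset.powersetCard (k-1) (G ∩ G'), val F := by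
        rw [show Finset.powersetCard (k-1) (G ∩ G')
            = (Finset.powersetCard (k-1) (univ : Finset (Fin n))).filter
              (fun F => F ⊆ G ∩ G') from by
          ext F
          simp [mem_powersetCard, mem_filter, Finset.subset_univ, and_comm]]
        rw [Finset.sum_filter]
        refine Finset.sum_congr rfl fun F _ => ?_
        refine if_congr ?_ rfl rfl
        constructor
        · intro ⟨a, b, _⟩; exact subset_inter a b
        · intro h
          exact ⟨h.trans inter_subset_left, h.trans inter_subset_right, hne, hU⟩
      rw [hstep]
      by_cases hcard : (G ∩ G').card = k - 1
      · rw [show Finset.powersetCard (k-1) (G ∩ G') = {G ∩ G'} from by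
          rw [← hcard]; exact powersetCard_self _]
        rw [sum_singleton, if_pos ⟨hne, hcard, hU⟩]
      · rw [powersetCard_eq_empty.mpr (by omega), sum_empty,
          if_neg (fun hc => hcard hc.2.1)]
    · rw [if_neg (fun hc => hU hc.2.2)]
      exact Finset.sum_eq_zero fun F _ => if_neg (fun hc => hU hc.2.2.2)
  · rw [if_neg (fun hc => hne hc.1)]
    exact Finset.sum_eq_zero fun F _ => if_neg (fun hc => hne hc.2.2.1)

lemma identity2 {n k : ℕ} (K : Finset (Finset (Fin n))) (hk : 1 ≤ k)
    (q : Finset (Fin n) → ℝ) :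
    ∑ F ∈ Finset.powersetCard (k-1) (univ : Finset (Fin n)),
        ∑ u ∈ LVSet n K F, ∑ v ∈ LVSet n K F,
        (if u ≠ v ∧ insert u (insert v F) ∈ K then
          ((incSign (insert u F) F * incSign (insert v F) F : ℤ) : ℝ)
            * q (insert v F) * q (insert u F) else 0)
      = ∑ G ∈ FacesSet n k K, ∑ G' ∈ FacesSet n k K,
        (if G ≠ G' ∧ (G ∩ G').card = k - 1 ∧ G ∪ G' ∈ K then
          ((incSign G (G ∩ G') * incSign G' (G ∩ G') : ℤ) : ℝ) * q G' * q G else 0) := by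
  calc ∑ F ∈ Finset.powersetCard (k-1) (univ : Finset (Fin n)),
        ∑ u ∈ LVSet n K F, ∑ v ∈ LVSet n K F,
        (if u ≠ v ∧ insert u (insert v F) ∈ K then
          ((incSign (insert u F) F * incSign (insert v F) F : ℤ) : ℝ)
            * q (insert v F) * q (insert u F) else 0)
      = ∑ F ∈ Finset.powersetCard (k-1) (univ : Finset (Fin n)),
          ∑ G ∈ (FacesSet n k K).filter (fun G => F ⊆ G),
          ∑ G' ∈ (FacesSet n k K).filter (fun G => F ⊆ G),
          (if G ≠ G' ∧ G ∪ G' ∈ K then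
            ((incSign G F * incSign G' F : ℤ) : ℝ) * q G' * q G else 0) := by
        refine Finset.sum_congr rfl fun F hF => ?_
        have hFc := (mem_powersetCard.mp hF).2
        calc ∑ u ∈ LVSet n K F, ∑ v ∈ LVSet n K F,
              (if u ≠ v ∧ insert u (insert v F) ∈ K then
                ((incSign (insert u F) F * incSign (insert v F) F : ℤ) : ℝ)
                  * q (insert v F) * q (insert u F) else 0)
            = ∑ u ∈ LVSet n K F,
                ∑ G' ∈ (FacesSet n k K).filter (fun G => F ⊆ G),
                (if insert u F ≠ G' ∧ insert u F ∪ G' ∈ K then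
                  ((incSign (insert u F) F * incSign G' F : ℤ) : ℝ)
                    * q G' * q (insert u F) else 0) := by
              refine Finset.sum_congr rfl fun u hu => ?_
              have hu' := (mem_LVSet.mp hu).1
              have hcongr : ∑ v ∈ LVSet n K F,
                  (if u ≠ v ∧ insert u (insert v F) ∈ K then
                    ((incSign (insert u F) F * incSign (insert v F) F : ℤ) : ℝ)
                      * q (insert v F) * q (insert u F) else 0)
                  = ∑ v ∈ LVSet n K F,
                  (if insert u F ≠ insert v F ∧ insert u F ∪ insert v F ∈ K then
                    ((incSign (insert u F) F * incSign (insert v F) F : ℤ) : ℝ)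
                      * q (insert v F) * q (insert u F) else 0) := by
                refine Finset.sum_congr rfl fun v hv => ?_
                have hv' := (mem_LVSet.mp hv).1
                refine if_congr (and_congr ?_ ?_) rfl rfl
                · exact not_congr (insert_eq_insert_iff hu' hv').symm
                · rw [insert_union_insert]
              rw [hcongr]
              exact bij_insert K hk hFc (fun G' =>
                if insert u F ≠ G' ∧ insert u F ∪ G' ∈ K then
                  ((incSign (insert u F) F * incSign G' F : ℤ) : ℝ)
                    * q G' * q (insert u F) else 0)
          _ = ∑ G ∈ (FacesSet n k K).filter (fun G => F ⊆ G),
                ∑ G' ∈ (FacesSet n k K).filter (fun G => F ⊆ G),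
                (if G ≠ G' ∧ G ∪ G' ∈ K then
                  ((incSign G F * incSign G' F : ℤ) : ℝ) * q G' * q G else 0) :=
              bij_insert K hk hFc (fun G =>
                ∑ G' ∈ (FacesSet n k K).filter (fun G => F ⊆ G),
                (if G ≠ G' ∧ G ∪ G' ∈ K then
                  ((incSign G F * incSign G' F : ℤ) : ℝ) * q G' * q G else 0))
    _ = ∑ F ∈ Finset.powersetCard (k-1) (univ : Finset (Fin n)),
          ∑ G ∈ FacesSet n k K, ∑ G' ∈ FacesSet n k K,
          (if F ⊆ G ∧ F ⊆ G' ∧ (G ≠ G' ∧ G ∪ G' ∈ K) then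
            ((incSign G F * incSign G' F : ℤ) : ℝ) * q G' * q G else 0) := by
        refine Finset.sum_congr rfl fun F _ => ?_
        rw [Finset.sum_filter]
        refine Finset.sum_congr rfl fun G _ => ?_
        by_cases hFG : F ⊆ G
        · rw [if_pos hFG, Finset.sum_filter]
          refine Finset.sum_congr rfl fun G' _ => ?_
          by_cases hFG' : F ⊆ G'
          · by_cases hc : G ≠ G' ∧ G ∪ G' ∈ K
            · rw [if_pos hFG', if_pos hc, if_pos ⟨hFG, hFG', hc⟩]
            · rw [if_pos hFG', if_neg hc, if_neg (fun h => hc h.2.2)]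
          · rw [if_neg hFG', if_neg (fun h => hFG' h.2.1)]
        · rw [if_neg hFG, eq_comm]
          exact Finset.sum_eq_zero fun G' _ => if_neg (fun h => hFG h.1)
    _ = ∑ G ∈ FacesSet n k K, ∑ G' ∈ FacesSet n k K,
          ∑ F ∈ Finset.powersetCard (k-1) (univ : Finset (Fin n)),
          (if F ⊆ G ∧ F ⊆ G' ∧ (G ≠ G' ∧ G ∪ G' ∈ K) then
            ((incSign G F * incSign G' F : ℤ) : ℝ) * q G' * q G else 0) := by
        rw [Finset.sum_comm]
        exact Finset.sum_congr rfl fun G _ => Finset.sum_comm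
    _ = ∑ G ∈ FacesSet n k K, ∑ G' ∈ FacesSet n k K,
        (if G ≠ G' ∧ (G ∩ G').card = k - 1 ∧ G ∪ G' ∈ K then
          ((incSign G (G ∩ G') * incSign G' (G ∩ G') : ℤ) : ℝ) * q G' * q G else 0) := by
        refine Finset.sum_congr rfl fun G hG => Finset.sum_congr rfl fun G' hG' => ?_
        exact Fsum_eval K hk (mem_FacesSet.mp hG).1 (mem_FacesSet.mp hG').1
          (fun F => ((incSign G F * incSign G' F : ℤ) : ℝ) * q G' * q G)

/-- The localized cochain on the link of `F`. -/
noncomputable def wfn (n k : ℕ) (K : Finset (Finset (Fin n))) (f : Faces n k K → ℝ)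
    (F : Finset (Fin n)) (x : Fin n) : ℝ :=
  ((incSign (insert x F) F : ℤ) : ℝ) * fext n k K f (insert x F)

/-- Weighted norm of the localized cochain. -/
noncomputable def NFv (n k : ℕ) (K : Finset (Finset (Fin n))) (deg : Finset (Fin n) → ℕ)
    (f : Faces n k K → ℝ) (F : Finset (Fin n)) : ℝ :=
  ∑ u ∈ LVSet n K F, (deg (insert u F) : ℝ) * wfn n k K f F u ^ 2

/-- Adjacency part of the link quadratic form. -/
noncomputable def TFv (n k : ℕ) (K : Finset (Finset (Fin n))) (f : Faces n k K → ℝ)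
    (F : Finset (Fin n)) : ℝ :=
  ∑ u ∈ LVSet n K F, ∑ v ∈ LVSet n K F,
    (if u ≠ v ∧ insert u (insert v F) ∈ K then (1 : ℝ) else 0)
      * wfn n k K f F v * wfn n k K f F u

/-- Garland's estimate: let `X` be a pure `k`-dimensional complex (with `k`-faces `K`).
If for every `(k−2)`-face `F` all nontrivial eigenvalues of the normalized Laplacian
`Δ(lk F)` of the link graph lie in `[λ_min, λ_max]` (expressed via the degree-weighted
quadratic form on vectors orthogonal to the all-ones vector), then for every `f` in the
degree-weighted orthogonal complement of `B^{k−1}(X;ℝ)`,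
`(1 + kλ_min − k)⟨f,f⟩ ≤ ⟨Δ^up_{k−1} f, f⟩ ≤ (1 + kλ_max − k)⟨f,f⟩`. -/
theorem stmt12 (n k : ℕ) (hk : 2 ≤ k)
    (K : Finset (Finset (Fin n))) (hK : ∀ H ∈ K, H.card = k + 1)
    (deg : Finset (Fin n) → ℕ) (hdeg : ∀ G, deg G = (K.filter (fun H => G ⊆ H)).card)
    (A Δ : Matrix (Faces n k K) (Faces n k K) ℝ)
    (hA : ∀ G G', A G G' = if G.1 ≠ G'.1 ∧ (G.1 ∩ G'.1).card = k - 1 ∧ G.1 ∪ G'.1 ∈ K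
        then ((incSign G.1 (G.1 ∩ G'.1) * incSign G'.1 (G.1 ∩ G'.1) : ℤ) : ℝ) else 0)
    (hΔ : Δ = 1 - Matrix.diagonal (fun G => ((deg G.1 : ℝ))⁻¹) * A)
    (Alk Δlk : ∀ F : Finset (Fin n), Matrix (LinkVerts n K F) (LinkVerts n K F) ℝ)
    (hAlk : ∀ F (u v : LinkVerts n K F), Alk F u v =
        if u ≠ v ∧ insert u.1 (insert v.1 F) ∈ K then (1 : ℝ) else 0)
    (hΔlk : ∀ F, Δlk F =
        1 - Matrix.diagonal (fun u : LinkVerts n K F => ((deg (insert u.1 F) : ℝ))⁻¹) * Alk F)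
    (lamMin lamMax : ℝ)
    (hlink : ∀ F : Finset (Fin n), F.card = k - 1 →
      ∀ w : LinkVerts n K F → ℝ,
        (∑ u, (deg (insert u.1 F) : ℝ) * w u = 0) →
        lamMin * (∑ u, (deg (insert u.1 F) : ℝ) * w u ^ 2)
            ≤ ∑ u, (deg (insert u.1 F) : ℝ) * ((Δlk F).mulVec w) u * w u ∧
        ∑ u, (deg (insert u.1 F) : ℝ) * ((Δlk F).mulVec w) u * w u
            ≤ lamMax * (∑ u, (deg (insert u.1 F) : ℝ) * w u ^ 2)) :
    ∀ f : Faces n k K → ℝ,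
      (∀ F' : Finset (Fin n), F'.card = k - 1 →
        ∑ G : Faces n k K, (deg G.1 : ℝ) * f G * (incSign G.1 F' : ℝ) = 0) →
      (1 + k * lamMin - k) * (∑ G, (deg G.1 : ℝ) * f G ^ 2)
          ≤ ∑ G, (deg G.1 : ℝ) * (Δ.mulVec f) G * f G ∧
      ∑ G, (deg G.1 : ℝ) * (Δ.mulVec f) G * f G
          ≤ (1 + k * lamMax - k) * (∑ G, (deg G.1 : ℝ) * f G ^ 2) := by
  intro f hf
  have hk1 : 1 ≤ k := by omega
  -- degrees of faces are nonzero
  have hdne : ∀ G : Finset (Fin n), (∃ H ∈ K, G ⊆ H) → (deg G : ℝ) ≠ 0 := by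
    rintro G ⟨H, hH, hGH⟩
    have : 0 < deg G := by
      rw [hdeg]
      exact Finset.card_pos.mpr ⟨H, mem_filter.mpr ⟨hH, hGH⟩⟩
    exact_mod_cast this.ne'
  set S : ℝ := ∑ G ∈ FacesSet n k K, (deg G : ℝ) * fext n k K f G ^ 2 with hS
  set TT : ℝ := ∑ G ∈ FacesSet n k K, ∑ G' ∈ FacesSet n k K,
    (if G ≠ G' ∧ (G ∩ G').card = k - 1 ∧ G ∪ G' ∈ K then
      ((incSign G (G ∩ G') * incSign G' (G ∩ G') : ℤ) : ℝ)
        * fext n k K f G' * fext n k K f G else 0) with hTT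
  -- convert the goal's norm
  have eS : (∑ G : Faces n k K, (deg G.1 : ℝ) * f G ^ 2) = S := by
    rw [hS]
    calc (∑ G : Faces n k K, (deg G.1 : ℝ) * f G ^ 2)
        = ∑ G : Faces n k K, (deg G.1 : ℝ) * fext n k K f G.1 ^ 2 :=
          Finset.sum_congr rfl fun G _ => by rw [fext_val]
      _ = ∑ G ∈ FacesSet n k K, (deg G : ℝ) * fext n k K f G ^ 2 :=
          (Finset.sum_subtype (FacesSet n k K) (fun _ => mem_FacesSet)
            (fun G => (deg G : ℝ) * fext n k K f G ^ 2)).symm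
  -- convert the goal's quadratic form
  have eQ : (∑ G : Faces n k K, (deg G.1 : ℝ) * (Δ.mulVec f) G * f G) = S - TT := by
    rw [hΔ, hS, hTT]
    refine (quadform (fun G : Faces n k K => (deg G.1 : ℝ))
      (fun G => hdne G.1 G.2.2) A f).trans ?_
    show (∑ G : Faces n k K, (deg G.1 : ℝ) * f G ^ 2)
        - (∑ G : Faces n k K, ∑ G' : Faces n k K, A G G' * f G' * f G) = _
    have h1 : (∑ G : Faces n k K, (deg G.1 : ℝ) * f G ^ 2)
        = ∑ G ∈ FacesSet n k K, (deg G : ℝ) * fext n k K f G ^ 2 := by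
      calc (∑ G : Faces n k K, (deg G.1 : ℝ) * f G ^ 2)
          = ∑ G : Faces n k K, (deg G.1 : ℝ) * fext n k K f G.1 ^ 2 :=
            Finset.sum_congr rfl fun G _ => by rw [fext_val]
        _ = ∑ G ∈ FacesSet n k K, (deg G : ℝ) * fext n k K f G ^ 2 :=
            (Finset.sum_subtype (FacesSet n k K) (fun _ => mem_FacesSet)
              (fun G => (deg G : ℝ) * fext n k K f G ^ 2)).symm
    have h2 : (∑ G : Faces n k K, ∑ G' : Faces n k K, A G G' * f G' * f G)
        = ∑ G ∈ FacesSet n k K, ∑ G' ∈ FacesSet n k K,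
          (if G ≠ G' ∧ (G ∩ G').card = k - 1 ∧ G ∪ G' ∈ K then
            ((incSign G (G ∩ G') * incSign G' (G ∩ G') : ℤ) : ℝ)
              * fext n k K f G' * fext n k K f G else 0) := by
      calc (∑ G : Faces n k K, ∑ G' : Faces n k K, A G G' * f G' * f G)
          = ∑ G : Faces n k K, ∑ G' : Faces n k K,
            (if G.1 ≠ G'.1 ∧ (G.1 ∩ G'.1).card = k - 1 ∧ G.1 ∪ G'.1 ∈ K then
              ((incSign G.1 (G.1 ∩ G'.1) * incSign G'.1 (G.1 ∩ G'.1) : ℤ) : ℝ)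
                * fext n k K f G'.1 * fext n k K f G.1 else 0) := by
            refine Finset.sum_congr rfl fun G _ => Finset.sum_congr rfl fun G' _ => ?_
            rw [hA, fext_val, fext_val, ite_mul, ite_mul, zero_mul, zero_mul]
        _ = ∑ G : Faces n k K, ∑ G' ∈ FacesSet n k K,
            (if G.1 ≠ G' ∧ (G.1 ∩ G').card = k - 1 ∧ G.1 ∪ G' ∈ K then
              ((incSign G.1 (G.1 ∩ G') * incSign G' (G.1 ∩ G') : ℤ) : ℝ)
                * fext n k K f G' * fext n k K f G.1 else 0) :=
            Finset.sum_congr rfl fun G _ =>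
              (Finset.sum_subtype (FacesSet n k K) (fun _ => mem_FacesSet)
                (fun G' => if G.1 ≠ G' ∧ (G.1 ∩ G').card = k - 1 ∧ G.1 ∪ G' ∈ K then
                  ((incSign G.1 (G.1 ∩ G') * incSign G' (G.1 ∩ G') : ℤ) : ℝ)
                    * fext n k K f G' * fext n k K f G.1 else 0)).symm
        _ = ∑ G ∈ FacesSet n k K, ∑ G' ∈ FacesSet n k K,
            (if G ≠ G' ∧ (G ∩ G').card = k - 1 ∧ G ∪ G' ∈ K then
              ((incSign G (G ∩ G') * incSign G' (G ∩ G') : ℤ) : ℝ)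
                * fext n k K f G' * fext n k K f G else 0) :=
            (Finset.sum_subtype (FacesSet n k K) (fun _ => mem_FacesSet)
              (fun G => ∑ G' ∈ FacesSet n k K,
                if G ≠ G' ∧ (G ∩ G').card = k - 1 ∧ G ∪ G' ∈ K then
                  ((incSign G (G ∩ G') * incSign G' (G ∩ G') : ℤ) : ℝ)
                    * fext n k K f G' * fext n k K f G else 0)).symm
    rw [h1, h2]
  -- the per-link bounds
  have hkey : ∀ F ∈ Finset.powersetCard (k-1) (univ : Finset (Fin n)),
      lamMin * NFv n k K deg f F ≤ NFv n k K deg f F - TFv n k K f F ∧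
      NFv n k K deg f F - TFv n k K f F ≤ lamMax * NFv n k K deg f F := by
    intro F hF
    have hFc : F.card = k - 1 := (mem_powersetCard.mp hF).2
    have hdF : ∀ u : LinkVerts n K F, ((deg (insert u.1 F) : ℝ)) ≠ 0 :=
      fun u => hdne _ u.2.2
    -- orthogonality of the localized cochain
    have horth : ∑ u : LinkVerts n K F,
        (deg (insert u.1 F) : ℝ) * (fun u : LinkVerts n K F => wfn n k K f F u.1) u = 0 := by
      have h1 : (∑ u : LinkVerts n K F, (deg (insert u.1 F) : ℝ) * wfn n k K f F u.1)
          = ∑ u ∈ LVSet n K F, (deg (insert u F) : ℝ) * wfn n k K f F u :=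
        (Finset.sum_subtype (LVSet n K F) (fun _ => mem_LVSet)
          (fun x => (deg (insert x F) : ℝ) * wfn n k K f F x)).symm
      have h2 : (∑ u ∈ LVSet n K F, (deg (insert u F) : ℝ) * wfn n k K f F u)
          = ∑ G ∈ (FacesSet n k K).filter (fun G => F ⊆ G),
              (deg G : ℝ) * ((incSign G F : ℝ) * fext n k K f G) :=
        bij_insert K hk1 hFc
          (fun G => (deg G : ℝ) * ((incSign G F : ℝ) * fext n k K f G))
      have h3 : (∑ G ∈ (FacesSet n k K).filter (fun G => F ⊆ G),
            (deg G : ℝ) * ((incSign G F : ℝ) * fext n k K f G))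
          = ∑ G ∈ FacesSet n k K, (deg G : ℝ) * ((incSign G F : ℝ) * fext n k K f G) := by
        refine Finset.sum_filter_of_ne fun G _ hne => ?_
        by_contra hFG
        exact hne (by rw [incSign_eq_zero hFG]; simp)
      have h4 : (∑ G ∈ FacesSet n k K, (deg G : ℝ) * ((incSign G F : ℝ) * fext n k K f G))
          = ∑ G : Faces n k K, (deg G.1 : ℝ) * f G * (incSign G.1 F : ℝ) := by
        rw [Finset.sum_subtype (FacesSet n k K) (fun _ => mem_FacesSet)
          (fun G => (deg G : ℝ) * ((incSign G F : ℝ) * fext n k K f G))]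
        exact Finset.sum_congr rfl fun G _ => by rw [fext_val]; ring
      calc ∑ u : LinkVerts n K F,
            (deg (insert u.1 F) : ℝ) * (fun u : LinkVerts n K F => wfn n k K f F u.1) u
          = ∑ G : Faces n k K, (deg G.1 : ℝ) * f G * (incSign G.1 F : ℝ) :=
            (h1.trans h2).trans (h3.trans h4)
        _ = 0 := hf F hFc
    obtain ⟨hlo, hhi⟩ := hlink F hFc (fun u => wfn n k K f F u.1) horth
    have eN : (∑ u : LinkVerts n K F, (deg (insert u.1 F) : ℝ) * wfn n k K f F u.1 ^ 2)
        = NFv n k K deg f F :=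
      (Finset.sum_subtype (LVSet n K F) (fun _ => mem_LVSet)
        (fun x => (deg (insert x F) : ℝ) * wfn n k K f F x ^ 2)).symm
    have eQlk : (∑ u : LinkVerts n K F, (deg (insert u.1 F) : ℝ)
          * ((Δlk F).mulVec (fun u => wfn n k K f F u.1)) u
          * (fun u : LinkVerts n K F => wfn n k K f F u.1) u)
        = NFv n k K deg f F - TFv n k K f F := by
      rw [hΔlk F]
      refine (quadform (fun u : LinkVerts n K F => (deg (insert u.1 F) : ℝ)) hdF
        (Alk F) (fun u => wfn n k K f F u.1)).trans ?_
      show (∑ u : LinkVerts n K F, (deg (insert u.1 F) : ℝ) * wfn n k K f F u.1 ^ 2)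
          - (∑ u : LinkVerts n K F, ∑ v : LinkVerts n K F,
              Alk F u v * wfn n k K f F v.1 * wfn n k K f F u.1) = _
      have hAdj : (∑ u : LinkVerts n K F, ∑ v : LinkVerts n K F,
            Alk F u v * wfn n k K f F v.1 * wfn n k K f F u.1) = TFv n k K f F := by
        calc (∑ u : LinkVerts n K F, ∑ v : LinkVerts n K F,
              Alk F u v * wfn n k K f F v.1 * wfn n k K f F u.1)
            = ∑ u : LinkVerts n K F, ∑ v : LinkVerts n K F,
              (if u.1 ≠ v.1 ∧ insert u.1 (insert v.1 F) ∈ K then (1:ℝ) else 0)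
                * wfn n k K f F v.1 * wfn n k K f F u.1 := by
              refine Finset.sum_congr rfl fun u _ => Finset.sum_congr rfl fun v _ => ?_
              rw [hAlk F u v]
              simp only [ne_eq, Subtype.ext_iff]
          _ = ∑ u : LinkVerts n K F, ∑ v ∈ LVSet n K F,
              (if u.1 ≠ v ∧ insert u.1 (insert v F) ∈ K then (1:ℝ) else 0)
                * wfn n k K f F v * wfn n k K f F u.1 :=
              Finset.sum_congr rfl fun u _ =>
                (Finset.sum_subtype (LVSet n K F) (fun _ => mem_LVSet)
                  (fun v => (if u.1 ≠ v ∧ insert u.1 (insert v F) ∈ K then (1:ℝ) else 0)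
                    * wfn n k K f F v * wfn n k K f F u.1)).symm
          _ = TFv n k K f F :=
              (Finset.sum_subtype (LVSet n K F) (fun _ => mem_LVSet)
                (fun u => ∑ v ∈ LVSet n K F,
                  (if u ≠ v ∧ insert u (insert v F) ∈ K then (1:ℝ) else 0)
                    * wfn n k K f F v * wfn n k K f F u)).symm
      rw [eN, hAdj]
    constructor
    · calc lamMin * NFv n k K deg f F
          = lamMin * (∑ u : LinkVerts n K F,
              (deg (insert u.1 F) : ℝ) * wfn n k K f F u.1 ^ 2) := by rw [eN]
        _ ≤ ∑ u : LinkVerts n K F, (deg (insert u.1 F) : ℝ)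
              * ((Δlk F).mulVec (fun u => wfn n k K f F u.1)) u
              * (fun u : LinkVerts n K F => wfn n k K f F u.1) u := hlo
        _ = NFv n k K deg f F - TFv n k K f F := eQlk
    · calc NFv n k K deg f F - TFv n k K f F
          = ∑ u : LinkVerts n K F, (deg (insert u.1 F) : ℝ)
              * ((Δlk F).mulVec (fun u => wfn n k K f F u.1)) u
              * (fun u : LinkVerts n K F => wfn n k K f F u.1) u := eQlk.symm
        _ ≤ lamMax * (∑ u : LinkVerts n K F,
              (deg (insert u.1 F) : ℝ) * wfn n k K f F u.1 ^ 2) := hhi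
        _ = lamMax * NFv n k K deg f F := by rw [eN]
  -- summing the two identities
  have hNF : ∑ F ∈ Finset.powersetCard (k-1) (univ : Finset (Fin n)), NFv n k K deg f F
      = (k : ℝ) * S := by
    rw [hS]
    calc ∑ F ∈ Finset.powersetCard (k-1) (univ : Finset (Fin n)), NFv n k K deg f F
        = ∑ F ∈ Finset.powersetCard (k-1) (univ : Finset (Fin n)), ∑ u ∈ LVSet n K F,
            (deg (insert u F) : ℝ) * fext n k K f (insert u F) ^ 2 := by
          refine Finset.sum_congr rfl fun F _ => Finset.sum_congr rfl fun u hu => ?_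
          have hu1 := (mem_LVSet.mp hu).1
          rw [wfn, mul_pow, show ((incSign (insert u F) F : ℤ) : ℝ) ^ 2 = 1 from by
            rw [sq]; exact incSign_insert_mul_self hu1, one_mul]
      _ = (k : ℝ) * ∑ G ∈ FacesSet n k K, (deg G : ℝ) * fext n k K f G ^ 2 :=
          identity1 K hk1 (fun G => (deg G : ℝ) * fext n k K f G ^ 2)
  have hTF : ∑ F ∈ Finset.powersetCard (k-1) (univ : Finset (Fin n)), TFv n k K f F = TT := by
    rw [hTT]
    calc ∑ F ∈ Finset.powersetCard (k-1) (univ : Finset (Fin n)), TFv n k K f F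
        = ∑ F ∈ Finset.powersetCard (k-1) (univ : Finset (Fin n)),
            ∑ u ∈ LVSet n K F, ∑ v ∈ LVSet n K F,
            (if u ≠ v ∧ insert u (insert v F) ∈ K then
              ((incSign (insert u F) F * incSign (insert v F) F : ℤ) : ℝ)
                * fext n k K f (insert v F) * fext n k K f (insert u F) else 0) := by
          refine Finset.sum_congr rfl fun F _ => Finset.sum_congr rfl fun u _ =>
            Finset.sum_congr rfl fun v _ => ?_
          by_cases hc : u ≠ v ∧ insert u (insert v F) ∈ K
          · rw [if_pos hc, if_pos hc, one_mul, wfn, wfn]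
            push_cast
            ring
          · rw [if_neg hc, if_neg hc, zero_mul, zero_mul]
      _ = _ := identity2 K hk1 (fext n k K f)
  have hsum1 : lamMin * ((k : ℝ) * S) ≤ (k : ℝ) * S - TT := by
    have := Finset.sum_le_sum (fun F hF => (hkey F hF).1)
    rw [← Finset.mul_sum, hNF, Finset.sum_sub_distrib, hNF, hTF] at this
    exact this
  have hsum2 : (k : ℝ) * S - TT ≤ lamMax * ((k : ℝ) * S) := by
    have := Finset.sum_le_sum (fun F hF => (hkey F hF).2)
    rw [Finset.sum_sub_distrib, hNF, hTF, ← Finset.mul_sum, hNF] at this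
    exact this
  rw [eS, eQ] at *
  constructor
  · rw [eS, eQ]
    nlinarith [hsum1]
  · rw [eS, eQ]
    nlinarith [hsum2]
end

section
/- Let X be a k-dimensional complex and suppose that for every (k−2)-face F and every vector w ⊥ 1 in C⁰(lk F), |⟨A(lk F) w, w⟩| ≤ h·⟨w,w⟩. Then for every z ∈ C^{k−1}(X;R) orthogonal (standard inner product) to B^{k−1}(X;R), |⟨A_{k−1}(X) z, z⟩| ≤ k·h·⟨z,z⟩. -/
lemma st13_incSign_insert {n : ℕ} {F : Finset (Fin n)} {u : Fin n} (hu : u ∉ F) :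
    incSign (insert u F) F = (-1) ^ (F.filter (fun x => x < u)).card := by
  have hsd : insert u F \ F = {u} := by
    ext x
    simp only [Finset.mem_sdiff, Finset.mem_insert, Finset.mem_singleton]
    constructor
    · rintro ⟨h1 | h1, h2⟩ <;> tauto
    · rintro rfl; exact ⟨Or.inl rfl, hu⟩
  rw [incSign, if_pos ⟨Finset.subset_insert u F, Finset.card_insert_of_notMem hu⟩, hsd,
    Finset.sum_singleton]

lemma st13_incSign_sq {n : ℕ} {F : Finset (Fin n)} {u : Fin n} (hu : u ∉ F) :
    ((incSign (insert u F) F : ℤ) : ℝ) ^ 2 = 1 := by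
  rw [st13_incSign_insert hu]
  push_cast
  rw [← pow_mul, mul_comm, pow_mul]
  norm_num

lemma st13_incSign_zero {n : ℕ} {F G : Finset (Fin n)} (h : ¬ F ⊆ G) : incSign G F = 0 := by
  rw [incSign, if_neg]; tauto

def mkFace {n k : ℕ} (K : Finset (Finset (Fin n))) {F : Finset (Fin n)} (hF : F.card + 1 = k)
    (u : LinkVerts n K F) : Faces n k K :=
  ⟨insert u.1 F, by rw [Finset.card_insert_of_notMem u.2.1]; exact hF, u.2.2⟩

lemma st13_sum_link {n k : ℕ} (K : Finset (Finset (Fin n))) {F : Finset (Fin n)}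
    (hF : F.card + 1 = k) (f : Faces n k K → ℝ) :
    ∑ u : LinkVerts n K F, f (mkFace K hF u) =
      ∑ G : Faces n k K, if F ⊆ G.1 then f G else 0 := by
  rw [← Finset.sum_filter]
  refine Finset.sum_bij (fun u _ => mkFace K hF u) ?_ ?_ ?_ ?_
  · intro u _
    simp only [Finset.mem_filter, Finset.mem_univ, true_and, mkFace]
    exact Finset.subset_insert u.1 F
  · intro u _ v _ hmk
    have hval : insert u.1 F = insert v.1 F := congrArg Subtype.val hmk
    have : u.1 ∈ insert v.1 F := hval ▸ Finset.mem_insert_self u.1 F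
    rcases Finset.mem_insert.mp this with h1 | h1
    · exact Subtype.ext h1
    · exact absurd h1 u.2.1
  · intro G hG
    have hFG : F ⊆ G.1 := (Finset.mem_filter.mp hG).2
    have hss : F ⊂ G.1 := by
      refine ⟨hFG, fun hsub => ?_⟩
      have := Finset.card_le_card hsub
      omega
    obtain ⟨u, huG, huF⟩ := Finset.exists_of_ssubset hss
    have hins : insert u F = G.1 := by
      apply Finset.eq_of_subset_of_card_le (Finset.insert_subset huG hFG)
      rw [Finset.card_insert_of_notMem huF, hF, G.2.1]
    refine ⟨⟨u, huF, ?_⟩, Finset.mem_univ _, ?_⟩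
    · obtain ⟨H, hHK, hGH⟩ := G.2.2
      exact ⟨H, hHK, hins ▸ hGH⟩
    · exact Subtype.ext (by simpa [mkFace] using hins)
  · intro u _; rfl

def wA {n k : ℕ} (K : Finset (Finset (Fin n))) (z : Faces n k K → ℝ) (F : Finset (Fin n))
    (u : LinkVerts n K F) : ℝ :=
  if hc : (insert u.1 F).card = k then
    ((incSign (insert u.1 F) F : ℤ) : ℝ) * z ⟨insert u.1 F, hc, u.2.2⟩ else 0

lemma st13_wA_eq {n k : ℕ} {K : Finset (Finset (Fin n))} {z : Faces n k K → ℝ}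
    {F : Finset (Fin n)} (hF : F.card + 1 = k) (u : LinkVerts n K F) :
    wA K z F u = ((incSign (insert u.1 F) F : ℤ) : ℝ) * z (mkFace K hF u) := by
  have hc : (insert u.1 F).card = k := by
    rw [Finset.card_insert_of_notMem u.2.1]; exact hF
  rw [wA, dif_pos hc]; rfl

def st13_X {n k : ℕ} {K : Finset (Finset (Fin n))} (z : Faces n k K → ℝ) (F : Finset (Fin n))
    (G G' : Faces n k K) : ℝ :=
  if F = G.1 ∩ G'.1 ∧ (G.1 ≠ G'.1 ∧ (G.1 ∩ G'.1).card = k - 1 ∧ G.1 ∪ G'.1 ∈ K)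
    then ((incSign G.1 (G.1 ∩ G'.1) * incSign G'.1 (G.1 ∩ G'.1) : ℤ) : ℝ) * z G' * z G
    else 0

lemma st13_X_zero {n k : ℕ} {K : Finset (Finset (Fin n))} (z : Faces n k K → ℝ)
    {F : Finset (Fin n)} (G G' : Faces n k K) (hcase : ¬ F ⊆ G.1 ∨ ¬ F ⊆ G'.1) :
    st13_X z F G G' = 0 := by
  rw [st13_X]
  apply if_neg
  rintro ⟨hFe, -⟩
  rcases hcase with hc | hc
  · exact hc (hFe ▸ Finset.inter_subset_left)
  · exact hc (hFe ▸ Finset.inter_subset_right)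

lemma st13_quad {n k : ℕ} {K : Finset (Finset (Fin n))}
    (z : Faces n k K → ℝ) {F : Finset (Fin n)} (hF : F.card + 1 = k)
    (AlkF : Matrix (LinkVerts n K F) (LinkVerts n K F) ℝ)
    (hAlkF : ∀ u v : LinkVerts n K F, AlkF u v =
        if u ≠ v ∧ insert u.1 (insert v.1 F) ∈ K then (1 : ℝ) else 0) :
    (∑ G : Faces n k K, ∑ G' : Faces n k K, st13_X z F G G')
    = ∑ u, (AlkF.mulVec (wA K z F)) u * wA K z F u := by
  have step1 : ∀ G : Faces n k K, (∑ G', st13_X z F G G') =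
      if F ⊆ G.1 then (∑ G', if F ⊆ G'.1 then st13_X z F G G' else 0) else 0 := by
    intro G
    by_cases hFG : F ⊆ G.1
    · rw [if_pos hFG]
      refine Finset.sum_congr rfl fun G' _ => ?_
      by_cases hFG' : F ⊆ G'.1
      · rw [if_pos hFG']
      · rw [if_neg hFG', st13_X_zero z G G' (Or.inr hFG')]
    · rw [if_neg hFG]
      exact Finset.sum_eq_zero fun G' _ => st13_X_zero z G G' (Or.inl hFG)
  have key : (∑ G : Faces n k K, ∑ G', st13_X z F G G')
      = ∑ u : LinkVerts n K F, ∑ v : LinkVerts n K F,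
          st13_X z F (mkFace K hF u) (mkFace K hF v) := by
    rw [Finset.sum_congr rfl fun G _ => step1 G,
      ← st13_sum_link K hF (fun G => ∑ G', if F ⊆ G'.1 then st13_X z F G G' else 0)]
    refine Finset.sum_congr rfl fun u _ => ?_
    rw [← st13_sum_link K hF (fun G' => st13_X z F (mkFace K hF u) G')]
  rw [key]
  refine Finset.sum_congr rfl fun u _ => ?_
  rw [Matrix.mulVec, dotProduct, Finset.sum_mul]
  refine Finset.sum_congr rfl fun v _ => ?_
  by_cases huv : u = v
  · subst huv
    have hdiag : st13_X z F (mkFace K hF u) (mkFace K hF u) = 0 := by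
      rw [st13_X]; apply if_neg; rintro ⟨-, hne, -⟩; exact hne rfl
    rw [hAlkF, if_neg (by simp), hdiag]; ring
  · have hne : u.1 ≠ v.1 := fun hh => huv (Subtype.ext hh)
    have hinter : insert u.1 F ∩ insert v.1 F = F := by
      ext x
      simp only [Finset.mem_inter, Finset.mem_insert]
      constructor
      · rintro ⟨h1 | h1, h2 | h2⟩ <;>
          first | (exact absurd (h1.symm.trans h2) hne) | assumption
      · intro hx; exact ⟨Or.inr hx, Or.inr hx⟩
    have hunion : insert u.1 F ∪ insert v.1 F = insert u.1 (insert v.1 F) := by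
      rw [Finset.insert_union, Finset.union_insert, Finset.union_self]
    have hGne : insert u.1 F ≠ insert v.1 F := by
      intro hh
      have : u.1 ∈ insert v.1 F := hh ▸ Finset.mem_insert_self u.1 F
      rcases Finset.mem_insert.mp this with h1 | h1
      · exact hne h1
      · exact u.2.1 h1
    have hFcard : F.card = k - 1 := by omega
    rw [hAlkF, st13_wA_eq hF u, st13_wA_eq hF v, st13_X]
    simp only [mkFace]
    simp only [hinter, hunion, -eq_self]
    by_cases hmem : insert u.1 (insert v.1 F) ∈ K
    · rw [if_pos ⟨rfl, hGne, hFcard ▸ rfl, hmem⟩,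
        if_pos ⟨fun hh => huv hh, hmem⟩]
      push_cast; ring
    · rw [if_neg (by tauto), if_neg (by tauto)]; ring

/-- If for every `(k−2)`-face `F` and every `w ⊥ 1` in `C⁰(lk F)` we have
`|⟨A(lk F) w, w⟩| ≤ h·⟨w,w⟩`, then for every `z` orthogonal (standard inner product) to
`B^{k−1}(X;ℝ)` we have `|⟨A_{k−1}(X) z, z⟩| ≤ k·h·⟨z,z⟩`. -/
theorem stmt13 (n k : ℕ) (hk : 2 ≤ k)
    (K : Finset (Finset (Fin n))) (hK : ∀ H ∈ K, H.card = k + 1)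
    (A : Matrix (Faces n k K) (Faces n k K) ℝ)
    (hA : ∀ G G', A G G' = if G.1 ≠ G'.1 ∧ (G.1 ∩ G'.1).card = k - 1 ∧ G.1 ∪ G'.1 ∈ K
        then ((incSign G.1 (G.1 ∩ G'.1) * incSign G'.1 (G.1 ∩ G'.1) : ℤ) : ℝ) else 0)
    (Alk : ∀ F : Finset (Fin n), Matrix (LinkVerts n K F) (LinkVerts n K F) ℝ)
    (hAlk : ∀ F (u v : LinkVerts n K F), Alk F u v =
        if u ≠ v ∧ insert u.1 (insert v.1 F) ∈ K then (1 : ℝ) else 0)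
    (h : ℝ)
    (hlink : ∀ F : Finset (Fin n), F.card = k - 1 →
      ∀ w : LinkVerts n K F → ℝ, (∑ u, w u = 0) →
        |∑ u, ((Alk F).mulVec w) u * w u| ≤ h * ∑ u, w u ^ 2) :
    ∀ z : Faces n k K → ℝ,
      (∀ F' : Finset (Fin n), F'.card = k - 1 →
        ∑ G : Faces n k K, z G * (incSign G.1 F' : ℝ) = 0) →
      |∑ G, (A.mulVec z) G * z G| ≤ k * h * ∑ G, z G ^ 2 := by
  intro z hz
  classical
  set S : Finset (Finset (Fin n)) := Finset.powersetCard (k - 1) Finset.univ with hSdef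
  have hScard : ∀ F ∈ S, F.card = k - 1 := fun F hFS => (Finset.mem_powersetCard.mp hFS).2
  have hSsucc : ∀ F ∈ S, F.card + 1 = k := fun F hFS => by
    have := hScard F hFS; omega
  -- Step 1: decompose the quadratic form over (k-2)-faces
  have pair : ∀ G G' : Faces n k K,
      A G G' * z G' * z G = ∑ F ∈ S, st13_X z F G G' := by
    intro G G'
    rw [hA]
    by_cases hP : G.1 ≠ G'.1 ∧ (G.1 ∩ G'.1).card = k - 1 ∧ G.1 ∪ G'.1 ∈ K
    · rw [if_pos hP]
      have hmemS : G.1 ∩ G'.1 ∈ S :=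
        Finset.mem_powersetCard.mpr ⟨Finset.subset_univ _, hP.2.1⟩
      have h1 : ∀ F ∈ S, st13_X z F G G' =
          if F = G.1 ∩ G'.1 then
            ((incSign G.1 (G.1 ∩ G'.1) * incSign G'.1 (G.1 ∩ G'.1) : ℤ) : ℝ) * z G' * z G
          else 0 := by
        intro F _
        rw [st13_X]
        by_cases hFe : F = G.1 ∩ G'.1
        · rw [if_pos ⟨hFe, hP⟩, if_pos hFe]
        · rw [if_neg (by tauto), if_neg hFe]
      rw [Finset.sum_congr rfl h1, Finset.sum_ite_eq' S (G.1 ∩ G'.1), if_pos hmemS]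
    · rw [if_neg hP, zero_mul, zero_mul]
      symm
      refine Finset.sum_eq_zero fun F _ => ?_
      rw [st13_X]
      exact if_neg (by tauto)
  have key : ∑ G, (A.mulVec z) G * z G
      = ∑ F ∈ S, ∑ u, ((Alk F).mulVec (wA K z F)) u * wA K z F u := by
    have e1 : ∑ G, (A.mulVec z) G * z G
        = ∑ G : Faces n k K, ∑ G' : Faces n k K, A G G' * z G' * z G := by
      refine Finset.sum_congr rfl fun G _ => ?_
      rw [Matrix.mulVec, dotProduct, Finset.sum_mul]
    have e2 : ∑ G : Faces n k K, ∑ G' : Faces n k K, A G G' * z G' * z G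
        = ∑ G : Faces n k K, ∑ F ∈ S, ∑ G' : Faces n k K, st13_X z F G G' := by
      refine Finset.sum_congr rfl fun G _ => ?_
      rw [← Finset.sum_comm]
      exact Finset.sum_congr rfl fun G' _ => pair G G'
    rw [e1, e2, Finset.sum_comm]
    exact Finset.sum_congr rfl fun F hFS =>
      st13_quad z (hSsucc F hFS) (Alk F) (hAlk F)
  -- Step 2: orthogonality of the localized vectors
  have horth : ∀ F ∈ S, ∑ u, wA K z F u = 0 := by
    intro F hFS
    have hF := hSsucc F hFS
    have h1 : ∑ u, wA K z F u
        = ∑ u : LinkVerts n K F,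
            (fun G : Faces n k K => ((incSign G.1 F : ℤ) : ℝ) * z G) (mkFace K hF u) := by
      refine Finset.sum_congr rfl fun u _ => ?_
      rw [st13_wA_eq hF u]
      simp only [mkFace]
    rw [h1, st13_sum_link K hF (fun G : Faces n k K => ((incSign G.1 F : ℤ) : ℝ) * z G)]
    have h2 : ∀ G : Faces n k K,
        (if F ⊆ G.1 then ((incSign G.1 F : ℤ) : ℝ) * z G else 0)
          = z G * ((incSign G.1 F : ℤ) : ℝ) := by
      intro G
      by_cases hFG : F ⊆ G.1
      · rw [if_pos hFG]; ring
      · rw [if_neg hFG, st13_incSign_zero hFG]; simp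
    rw [Finset.sum_congr rfl fun G _ => h2 G]
    exact hz F (hScard F hFS)
  -- Step 3: the localized norms sum to k ⟨z,z⟩
  have hC : ∑ F ∈ S, ∑ u, (wA K z F u) ^ 2 = (k : ℝ) * ∑ G, z G ^ 2 := by
    have e1 : ∀ F ∈ S, ∑ u, (wA K z F u) ^ 2
        = ∑ G : Faces n k K, if F ⊆ G.1 then z G ^ 2 else 0 := by
      intro F hFS
      have hF := hSsucc F hFS
      have h1 : ∑ u, (wA K z F u) ^ 2
          = ∑ u : LinkVerts n K F, (fun G : Faces n k K => z G ^ 2) (mkFace K hF u) := by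
        refine Finset.sum_congr rfl fun u _ => ?_
        rw [st13_wA_eq hF u, mul_pow, st13_incSign_sq u.2.1, one_mul]
      rw [h1, st13_sum_link K hF (fun G : Faces n k K => z G ^ 2)]
    rw [Finset.sum_congr rfl e1, Finset.sum_comm]
    have e2 : ∀ G : Faces n k K,
        ∑ F ∈ S, (if F ⊆ G.1 then z G ^ 2 else 0) = (k : ℝ) * z G ^ 2 := by
      intro G
      rw [← Finset.sum_filter, Finset.sum_const, nsmul_eq_mul]
      congr 1
      have hfil : S.filter (fun F => F ⊆ G.1) = Finset.powersetCard (k - 1) G.1 := by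
        ext F
        simp only [Finset.mem_filter, hSdef, Finset.mem_powersetCard, Finset.subset_univ,
          true_and]
        tauto
      rw [hfil, Finset.card_powersetCard, G.2.1]
      have h1 : k - (k - 1) = 1 := by omega
      rw [← Nat.choose_symm (by omega : k - 1 ≤ k), h1, Nat.choose_one_right]
    rw [Finset.sum_congr rfl fun G _ => e2 G, ← Finset.mul_sum]
  -- Final assembly
  rw [key]
  calc |∑ F ∈ S, ∑ u, ((Alk F).mulVec (wA K z F)) u * wA K z F u|
      ≤ ∑ F ∈ S, |∑ u, ((Alk F).mulVec (wA K z F)) u * wA K z F u| :=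
        Finset.abs_sum_le_sum_abs _ _
    _ ≤ ∑ F ∈ S, h * ∑ u, (wA K z F u) ^ 2 :=
        Finset.sum_le_sum fun F hFS =>
          hlink F (hScard F hFS) (wA K z F) (horth F hFS)
    _ = h * ∑ F ∈ S, ∑ u, (wA K z F u) ^ 2 := by rw [Finset.mul_sum]
    _ = h * ((k : ℝ) * ∑ G, z G ^ 2) := by rw [hC]
    _ = k * h * ∑ G, z G ^ 2 := by ring
end
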